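/- Let U be a finite group equipped with a partial order ≤ on its underlying set, and let H be a subgroup of U. Define a relation ⪯ on the set H\U of right cosets of H by: Hu₁ ⪯ Hu₂ if and only if for every u ∈ Hu₂ there exists u' ∈ Hu₁ with u' ≤ u. Then ⪯ is a partial order on H\U (it is reflexive, transitive, and antisymmetric). -/

import Mathlib

lemma coset_eq_aux {U : Type*} [Group U] (H : Subgroup U) {u₁ u₂ h₁ h₂ : U}
    (m₁ : h₁ ∈ H) (m₂ : h₂ ∈ H) (e : h₁ * u₁ = h₂ * u₂) :
    {y : U | ∃ h ∈ H, y = h * u₁} = {y : U | ∃ h ∈ H, y = h * u₂} := by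
  have key : u₁ = (h₁⁻¹ * h₂) * u₂ := by
    rw [mul_assoc, ← e, ← mul_assoc, inv_mul_cancel, one_mul]
  ext y
  constructor
  · rintro ⟨h, hm, rfl⟩
    exact ⟨h * (h₁⁻¹ * h₂), mul_mem hm (mul_mem (inv_mem m₁) m₂),
      by rw [key]; group⟩
  · rintro ⟨h, hm, rfl⟩
    refine ⟨h * (h₂⁻¹ * h₁), mul_mem hm (mul_mem (inv_mem m₂) m₁), ?_⟩
    rw [key]
    group

/-- Let `U` be a finite group equipped with a partial order `≤` and `H` a
subgroup of `U`.  The relation on right cosets `Hu₁ ⪯ Hu₂ ↔ ∀ u ∈ Hu₂, ∃ u' ∈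
Hu₁, u' ≤ u` is reflexive, transitive, and antisymmetric (antisymmetry meaning
that the two right cosets coincide). -/
theorem stmt_13 (U : Type*) [Group U] [Fintype U] [PartialOrder U] (H : Subgroup U) :
    let R : U → U → Prop := fun u₁ u₂ =>
      ∀ u ∈ {y : U | ∃ h ∈ H, y = h * u₂}, ∃ u' ∈ {y : U | ∃ h ∈ H, y = h * u₁}, u' ≤ u
    (∀ u : U, R u u) ∧
    (∀ u₁ u₂ u₃ : U, R u₁ u₂ → R u₂ u₃ → R u₁ u₃) ∧
    (∀ u₁ u₂ : U, R u₁ u₂ → R u₂ u₁ →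
      {y : U | ∃ h ∈ H, y = h * u₁} = {y : U | ∃ h ∈ H, y = h * u₂}) := by
  intro R
  refine ⟨fun u v hv => ⟨v, hv, le_refl v⟩, ?_, ?_⟩
  · intro u₁ u₂ u₃ h12 h23 u hu
    obtain ⟨v, hv, hvu⟩ := h23 u hu
    obtain ⟨w, hw, hwv⟩ := h12 v hv
    exact ⟨w, hw, le_trans hwv hvu⟩
  · intro u₁ u₂ h12 h21
    -- pick a minimal element of the coset of u₂
    have hfin : ({y : U | ∃ h ∈ H, y = h * u₂}).Finite := Set.toFinite _
    have hne : ({y : U | ∃ h ∈ H, y = h * u₂}).Nonempty := ⟨u₂, 1, one_mem H, (one_mul u₂).symm⟩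
    obtain ⟨m, hm, hmin⟩ : ∃ a ∈ {y : U | ∃ h ∈ H, y = h * u₂}, ∀ a' ∈ {y : U | ∃ h ∈ H, y = h * u₂}, id a' ≤ id a → id a = id a' := by
      obtain ⟨a, ha⟩ := hfin.exists_minimal hne
      exact ⟨a, ha.1, fun a' h1 h2 => le_antisymm (ha.2 h1 h2) h2⟩
    obtain ⟨hm2, hm2mem, rfl⟩ := hm
    -- m = hm2 * u₂ ∈ coset u₂ minimal; get v ∈ coset u₁ with v ≤ m
    obtain ⟨v, hv, hvm⟩ := h12 _ ⟨hm2, hm2mem, rfl⟩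
    obtain ⟨w, hw, hwv⟩ := h21 v hv
    have hwm : w ≤ hm2 * u₂ := le_trans hwv hvm
    have hweq : w = hm2 * u₂ := by
      have := hmin w hw hwm
      simpa using this.symm
    have hveq : v = hm2 * u₂ := le_antisymm hvm (hweq ▸ hwv)
    obtain ⟨hv1, hv1mem, hv1eq⟩ := hv
    exact coset_eq_aux H hv1mem hm2mem (hv1eq ▸ hveq)
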